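/- arXiv:2212.05526 — 5 statements merged into one kernel-verified Lean document; each statement's English description precedes it below -/
import Mathlib

section
/- (General join decomposition, concrete form of Lemma 1.) Let ι be a finite index set of tables, where table i is a finite multiset A_i of records of type R_i. Let G be a finite set of equivalent-key-group variables with finite value domain Val, and for each i let S_i ⊆ G and κ_i : R_i → (S_i → Val) be the key map of table i. Assume every g ∈ G lies in S_i for at least one i. Define the join as the multiset of tuples r ∈ Π_{i∈ι} A_i such that for all i, j ∈ ι and every g ∈ S_i ∩ S_j, κ_i(r_i)(g) = κ_j(r_j)(g). Then |Join| = ∑_{a : G → Val} Π_{i∈ι} |{x ∈ A_i : ∀ g ∈ S_i, κ_i(x)(g) = a(g)}|, i.e., the join cardinality equals the sum, over all assignments of values to the group variables, of the product of per-table conditional counts. -/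
private lemma countP_bind' {α β : Type*} (s : Multiset α) (f : α → Multiset β)
    (q : β → Prop) [DecidablePred q] :
    (s.bind f).countP q = (s.map fun a => (f a).countP q).sum := by
  induction s using Multiset.induction with
  | empty => simp
  | cons a s ih => simp [Multiset.countP_add, ih]

private lemma sum_map_ite_const {α : Type*} (s : Multiset α) (p : α → Prop)
    [DecidablePred p] (C : ℕ) :
    (s.map fun b => if p b then C else 0).sum = s.countP p * C := by
  induction s using Multiset.induction with
  | empty => simp
  | cons a s ih =>
    rw [Multiset.map_cons, Multiset.sum_cons, ih, Multiset.countP_cons, add_mul]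
    by_cases h : p a <;> simp [h, add_comm]

private lemma countP_irrel {α : Type*} (s : Multiset α) (p : α → Prop)
    (h1 h2 : DecidablePred p) :
    @Multiset.countP α p h1 s = @Multiset.countP α p h2 s := by
  rw [Subsingleton.elim h1 h2]

private lemma countP_pi' {ι : Type*} [DecidableEq ι] {R : ι → Type*}
    (m : Multiset ι) (hm : m.Nodup) (t : ∀ i, Multiset (R i)) (p : ∀ i, R i → Prop)
    [∀ i, DecidablePred (p i)] :
    (Multiset.pi m t).countP (fun r => ∀ i (h : i ∈ m), p i (r i h))
      = (m.map fun i => (t i).countP (p i)).prod := by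
  induction m using Multiset.induction with
  | empty =>
    simp only [Multiset.pi_zero, Multiset.map_zero, Multiset.prod_zero]
    rw [Multiset.countP_eq_card_filter, Multiset.filter_eq_self.2 (by simp)]
    simp
  | cons a m ih =>
    have ham : a ∉ m := (Multiset.nodup_cons.1 hm).1
    have hm' : m.Nodup := (Multiset.nodup_cons.1 hm).2
    rw [Multiset.pi_cons, countP_bind']
    have key : ∀ b : R a,
        ((Multiset.pi m t).map (Multiset.Pi.cons m a b)).countP
          (fun r => ∀ i (h : i ∈ a ::ₘ m), p i (r i h))
        = if p a b then (Multiset.pi m t).countP (fun r => ∀ i (h : i ∈ m), p i (r i h))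
          else 0 := by
      intro b
      rw [Multiset.countP_map]
      have hiff : ∀ f : ∀ i ∈ m, R i,
          (∀ i (h : i ∈ a ::ₘ m), p i (Multiset.Pi.cons m a b f i h))
          ↔ (p a b ∧ ∀ i (h : i ∈ m), p i (f i h)) := by
        intro f
        constructor
        · intro H
          refine ⟨?_, fun i h => ?_⟩
          · have := H a (Multiset.mem_cons_self a m)
            rwa [Multiset.Pi.cons_same] at this
          · have hne : i ≠ a := fun hia => ham (hia ▸ h)
            have := H i (Multiset.mem_cons_of_mem h)
            rwa [Multiset.Pi.cons_ne _ hne] at this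
        · rintro ⟨hb, hf⟩ i h
          rcases Multiset.mem_cons.1 h with rfl | h'
          · rwa [Multiset.Pi.cons_same]
          · have hne : i ≠ a := fun hia => ham (hia ▸ h')
            rw [Multiset.Pi.cons_ne _ hne]
            exact hf i h'
      by_cases hb : p a b
      · rw [if_pos hb, Multiset.countP_eq_card_filter]
        congr 1
        apply Multiset.filter_congr
        intro f _
        exact (hiff f).trans (and_iff_right hb)
      · rw [if_neg hb, Multiset.card_eq_zero, Multiset.filter_eq_nil]
        intro f _ H
        exact hb ((hiff f).1 H).1
    rw [Multiset.map_congr rfl fun b _ => key b, sum_map_ite_const,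
      Multiset.map_cons, Multiset.prod_cons, ← ih hm']

private lemma sum_countP_unique {α A : Type*} [Fintype A] [DecidableEq A]
    (m : Multiset α) (Q : A → α → Prop) [∀ a, DecidablePred (Q a)]
    [DecidablePred fun x => ∃ a, Q a x]
    (huniq : ∀ x a a', Q a x → Q a' x → a = a') :
    ∑ a : A, m.countP (Q a) = m.countP (fun x => ∃ a, Q a x) := by
  induction m using Multiset.induction with
  | empty => simp
  | cons x m ih =>
    simp only [Multiset.countP_cons, Finset.sum_add_distrib, ih]
    congr 1
    by_cases h : ∃ a, Q a x
    · obtain ⟨a, ha⟩ := h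
      rw [if_pos ⟨a, ha⟩, Finset.sum_eq_single a]
      · simp [ha]
      · intro a' _ hne
        rw [if_neg fun h' => hne (huniq x a' a h' ha)]
      · simp
    · rw [if_neg h]
      apply Finset.sum_eq_zero
      intro a _
      rw [if_neg fun h' => h ⟨a, h'⟩]

/-- General join decomposition, concrete form of Lemma 1.
The cardinality of a general equi-join —  the multiset of tuples (one record per
table) agreeing on every equivalent-key-group variable shared by two tables —
equals the sum, over all assignments of values to the group variables, of the
product of the per-table conditional counts, provided every group variable is
touched by at least one table. -/
theorem join_card_eq_sum_assignments_prod_counts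
    {ι G Val : Type*} [Fintype ι] [DecidableEq ι]
    [Fintype G] [DecidableEq G] [Fintype Val] [DecidableEq Val]
    {R : ι → Type*} (A : ∀ i, Multiset (R i))
    (S : ι → Finset G)
    (κ : ∀ i, R i → {g // g ∈ S i} → Val)
    (hcover : ∀ g : G, ∃ i, g ∈ S i) :
    Multiset.card
      ((Multiset.pi (Finset.univ : Finset ι).val (fun i => A i)).filter
        (fun r => ∀ (i j : ι) (g : G) (hgi : g ∈ S i) (hgj : g ∈ S j),
          κ i (r i (Finset.mem_univ i)) ⟨g, hgi⟩ =
            κ j (r j (Finset.mem_univ j)) ⟨g, hgj⟩)) =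
      ∑ a : G → Val, ∏ i : ι,
        (A i).countP (fun x => ∀ (g : G) (hg : g ∈ S i), κ i x ⟨g, hg⟩ = a g) := by
  classical
  set m := (Finset.univ : Finset ι).val with hm
  -- Per-assignment predicate on tuples
  set Q : (G → Val) → (∀ i ∈ m, R i) → Prop :=
    fun a r => ∀ i (h : i ∈ m), ∀ (g : G) (hg : g ∈ S i), κ i (r i h) ⟨g, hg⟩ = a g with hQ
  have huniq : ∀ r a a', Q a r → Q a' r → a = a' := by
    intro r a a' h h'
    funext g
    obtain ⟨i, hgi⟩ := hcover g
    rw [← h i (Finset.mem_univ i) g hgi, ← h' i (Finset.mem_univ i) g hgi]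
  rw [← Multiset.countP_eq_card_filter]
  have hiff : ∀ r : ∀ i ∈ m, R i,
      (∀ (i j : ι) (g : G) (hgi : g ∈ S i) (hgj : g ∈ S j),
          κ i (r i (Finset.mem_univ i)) ⟨g, hgi⟩ =
            κ j (r j (Finset.mem_univ j)) ⟨g, hgj⟩)
      ↔ ∃ a, Q a r := by
    intro r
    constructor
    · intro H
      refine ⟨fun g => κ (Classical.choose (hcover g))
        (r (Classical.choose (hcover g)) (Finset.mem_univ _))
        ⟨g, Classical.choose_spec (hcover g)⟩, ?_⟩
      intro i h g hg
      exact H i (Classical.choose (hcover g)) g hg (Classical.choose_spec (hcover g))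
    · rintro ⟨a, ha⟩ i j g hgi hgj
      rw [ha i (Finset.mem_univ i) g hgi, ha j (Finset.mem_univ j) g hgj]
  rw [show (Multiset.pi m fun i => A i).countP
        (fun r => ∀ (i j : ι) (g : G) (hgi : g ∈ S i) (hgj : g ∈ S j),
          κ i (r i (Finset.mem_univ i)) ⟨g, hgi⟩ =
            κ j (r j (Finset.mem_univ j)) ⟨g, hgj⟩)
      = (Multiset.pi m fun i => A i).countP (fun r => ∃ a, Q a r) by
    rw [Multiset.countP_eq_card_filter, Multiset.countP_eq_card_filter]
    congr 1
    exact Multiset.filter_congr fun r _ => hiff r]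
  rw [← sum_countP_unique _ Q huniq]
  refine Finset.sum_congr rfl fun a _ => ?_
  have h1 := countP_pi' m (Finset.univ : Finset ι).nodup (fun i => A i)
    (fun i x => ∀ (g : G) (hg : g ∈ S i), κ i x ⟨g, hg⟩ = a g)
  calc Multiset.countP (Q a) (Multiset.pi m fun i => A i)
      = Multiset.countP
          (fun r : ∀ i ∈ m, R i => ∀ i (h : i ∈ m) (g : G) (hg : g ∈ S i),
            κ i (r i h) ⟨g, hg⟩ = a g) (Multiset.pi m fun i => A i) :=
        Multiset.countP_congr rfl fun r _ => rfl
    _ = (m.map fun i => (A i).countP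
          (fun x => ∀ (g : G) (hg : g ∈ S i), κ i x ⟨g, hg⟩ = a g)).prod :=
        (countP_irrel _ _ _ _).trans h1
    _ = ∏ i : ι, (A i).countP
          (fun x => ∀ (g : G) (hg : g ∈ S i), κ i x ⟨g, hg⟩ = a g) := rfl
end

section
/- (Four-table star/chain query, Equation (2).) Let A, B, C, D be tables with key functions id, id2 : R_A → V₁ × V₂ projections (i.e., A carries keys A.id into V₁ and A.id2 into V₂), B carries keys B.Aid into V₁ and B.Cid into V₃, C carries keys C.Aid2 into V₂ and C.id into V₃, and D carries key D.Cid into V₃, with all value domains finite; let Q_A, Q_B, Q_C, Q_D be filter predicates. Then the cardinality of the join with conditions A.id = B.Aid, A.id2 = C.Aid2, B.Cid = C.id = D.Cid on the filtered tables equals ∑_{a1 ∈ V₁} ∑_{a2 ∈ V₂} ∑_{c ∈ V₃} c_{A|Q_A}(a1, a2) · c_{B|Q_B}(a1, c) · c_{C|Q_C}(a2, c) · c_{D|Q_D}(c), where each factor is the joint count of the indicated key values among the filtered records of that table. -/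
lemma countP_product' {α β : Type*} (A : Multiset α) (B : Multiset β)
    (p : α → Prop) (q : β → Prop) [DecidablePred p] [DecidablePred q] :
    (A ×ˢ B).countP (fun x => p x.1 ∧ q x.2) = A.countP p * B.countP q := by
  induction A using Multiset.induction_on with
  | empty => simp [Multiset.zero_product]
  | cons a A ih =>
    rw [Multiset.cons_product, Multiset.countP_add, ih, Multiset.countP_map,
      Multiset.countP_cons]
    by_cases hp : p a
    · simp [hp, add_mul, Multiset.countP_eq_card_filter, Nat.add_comm]
    · simp [hp, Multiset.filter_eq_nil]

lemma countP_key_sum {α V : Type*} [Fintype V] [DecidableEq V]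
    (X : Multiset α) (P : α → Prop) [DecidablePred P] (f : α → V) :
    X.countP P = ∑ v : V, X.countP (fun x => P x ∧ f x = v) := by
  induction X using Multiset.induction_on with
  | empty => simp
  | cons a X ih =>
    simp only [Multiset.countP_cons, ih, Finset.sum_add_distrib]
    congr 1
    by_cases hP : P a
    · simp [hP, Finset.sum_ite_eq']
    · simp [hP]



/-- Four-table star/chain query, Equation (2).
The cardinality of the join of filtered tables A, B, C, D with conditions
A.id = B.Aid, A.id2 = C.Aid2, B.Cid = C.id = D.Cid equals the triple sum over
the three key domains of the products of single-table joint counts. -/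
theorem four_table_join_card_eq_triple_sum
    {R_A R_B R_C R_D V₁ V₂ V₃ : Type*}
    [Fintype V₁] [DecidableEq V₁] [Fintype V₂] [DecidableEq V₂]
    [Fintype V₃] [DecidableEq V₃]
    (A : Multiset R_A) (B : Multiset R_B) (C : Multiset R_C) (D : Multiset R_D)
    (idA : R_A → V₁) (id2A : R_A → V₂)
    (AidB : R_B → V₁) (CidB : R_B → V₃)
    (Aid2C : R_C → V₂) (idC : R_C → V₃)
    (CidD : R_D → V₃)
    (QA : R_A → Prop) (QB : R_B → Prop) (QC : R_C → Prop) (QD : R_D → Prop)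
    [DecidablePred QA] [DecidablePred QB] [DecidablePred QC] [DecidablePred QD] :
    Multiset.card
      (((A.filter QA) ×ˢ (B.filter QB) ×ˢ (C.filter QC) ×ˢ (D.filter QD)).filter
        (fun p => idA p.1 = AidB p.2.1 ∧ id2A p.1 = Aid2C p.2.2.1 ∧
          CidB p.2.1 = idC p.2.2.1 ∧ idC p.2.2.1 = CidD p.2.2.2)) =
      ∑ a1 : V₁, ∑ a2 : V₂, ∑ c : V₃,
        ((A.filter QA).countP (fun a => idA a = a1 ∧ id2A a = a2)) *
        ((B.filter QB).countP (fun b => AidB b = a1 ∧ CidB b = c)) *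
        ((C.filter QC).countP (fun x => Aid2C x = a2 ∧ idC x = c)) *
        ((D.filter QD).countP (fun d => CidD d = c)) := by
  classical
  rw [← Multiset.countP_eq_card_filter,
      countP_key_sum _ _ (fun p => idA p.1)]
  refine Finset.sum_congr rfl fun a1 _ => ?_
  rw [countP_key_sum _ _ (fun p => id2A p.1)]
  refine Finset.sum_congr rfl fun a2 _ => ?_
  rw [countP_key_sum _ _ (fun p => idC p.2.2.1)]
  refine Finset.sum_congr rfl fun c _ => ?_
  have h := Multiset.countP_congr (s := (A.filter QA) ×ˢ (B.filter QB) ×ˢ (C.filter QC) ×ˢ (D.filter QD)) rfl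
    (p := fun x => (((idA x.1 = AidB x.2.1 ∧ id2A x.1 = Aid2C x.2.2.1 ∧
          CidB x.2.1 = idC x.2.2.1 ∧ idC x.2.2.1 = CidD x.2.2.2) ∧ idA x.1 = a1) ∧ id2A x.1 = a2) ∧ idC x.2.2.1 = c)
    (p' := fun x => (idA x.1 = a1 ∧ id2A x.1 = a2) ∧ ((AidB x.2.1 = a1 ∧ CidB x.2.1 = c) ∧
          ((Aid2C x.2.2.1 = a2 ∧ idC x.2.2.1 = c) ∧ CidD x.2.2.2 = c)))
    (fun x _ => by
      obtain ⟨a,b,cc,d⟩ := x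
      simp only [eq_iff_iff]
      constructor
      · rintro ⟨⟨⟨⟨h1,h2,h3,h4⟩,h5⟩,h6⟩,h7⟩
        exact ⟨⟨h5,h6⟩,⟨h1.symm.trans h5, h3.trans h7⟩,⟨h2.symm.trans h6, h7⟩,h4.symm.trans h7⟩
      · rintro ⟨⟨h5,h6⟩,⟨hb1,hb2⟩,⟨hc1,hc2⟩,hd⟩
        exact ⟨⟨⟨⟨h5.trans hb1.symm, h6.trans hc1.symm, hb2.trans hc2.symm, hc2.trans hd.symm⟩,h5⟩,h6⟩,hc2⟩)
  have h2 := countP_product' (A.filter QA) ((B.filter QB) ×ˢ (C.filter QC) ×ˢ (D.filter QD))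
    (fun a => idA a = a1 ∧ id2A a = a2)
    (fun y => (AidB y.1 = a1 ∧ CidB y.1 = c) ∧
      ((Aid2C y.2.1 = a2 ∧ idC y.2.1 = c) ∧ CidD y.2.2 = c))
  have h3 := countP_product' (B.filter QB) ((C.filter QC) ×ˢ (D.filter QD))
    (fun b => AidB b = a1 ∧ CidB b = c)
    (fun y => (Aid2C y.1 = a2 ∧ idC y.1 = c) ∧ CidD y.2 = c)
  have h4 := countP_product' (C.filter QC) (D.filter QD)
    (fun x => Aid2C x = a2 ∧ idC x = c) (fun d => CidD d = c)
  beta_reduce at h2 h3 h4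
  rw [h, h2, h3, h4]
  ring
end

section
/- (Global probabilistic-bound validity, Equation (4)/(5).) Let A and B be tables with join-key functions κ_A, κ_B into a finite value domain V, let Q_A, Q_B be filter predicates, and let {bin_1, …, bin_k} be a partition of V. For each bin i, let S_{A,i} = ∑_{v ∈ bin_i} c_{A|Q_A,κ_A}(v), V*_{A,i} = max_{v ∈ bin_i} c_{A|Q_A,κ_A}(v) (taken as 0 for an empty bin), and analogously S_{B,i}, V*_{B,i}. Then the true join cardinality is upper bounded bin-by-bin: |{(a,b) : a ∈ A|Q_A, b ∈ B|Q_B, κ_A(a) = κ_B(b)}| ≤ ∑_{i=1}^{k} min(S_{A,i} · V*_{B,i}, S_{B,i} · V*_{A,i}). -/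
lemma join_card_eq_sum {R_A R_B V : Type*} [Fintype V] [DecidableEq V]
    (A : Multiset R_A) (B : Multiset R_B) (κA : R_A → V) (κB : R_B → V) :
    Multiset.card ((A ×ˢ B).filter (fun p => κA p.1 = κB p.2)) =
      ∑ v : V, (A.countP (fun a => κA a = v)) * (B.countP (fun b => κB b = v)) := by
  induction A using Multiset.induction with
  | empty => simp
  | cons a A ih =>
    rw [Multiset.cons_product, Multiset.filter_add, Multiset.card_add, ih,
      Multiset.filter_map, Multiset.card_map]
    have h1 : Multiset.card (B.filter ((fun p : R_A × R_B => κA p.1 = κB p.2) ∘ Prod.mk a))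
        = B.countP (fun b => κB b = κA a) := by
      rw [← Multiset.countP_eq_card_filter]
      apply Multiset.countP_congr rfl
      intro b _; simp [eq_comm]
    rw [h1]
    have h2 : ∀ v : V, (a ::ₘ A).countP (fun x => κA x = v)
        = A.countP (fun x => κA x = v) + if κA a = v then 1 else 0 := by
      intro v
      by_cases h : κA a = v <;> simp [Multiset.countP_cons, h]
    simp only [h2, add_mul, Finset.sum_add_distrib]
    rw [add_comm]
    congr 1
    rw [Finset.sum_eq_single (κA a)]
    · simp
    · intro v _ hv; simp [Ne.symm hv]
    · simp

/-- Global probabilistic-bound validity, Equation (4)/(5).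
Given a partition of the key domain into bins, the true filtered equi-join
cardinality is upper bounded bin-by-bin by the most-frequent-value bound
min(S_A·V*_B, S_B·V*_A). -/
theorem equijoin_card_le_binned_mfv_bound
    {R_A R_B V : Type*} [Fintype V] [DecidableEq V]
    (A : Multiset R_A) (B : Multiset R_B)
    (κA : R_A → V) (κB : R_B → V)
    (QA : R_A → Prop) (QB : R_B → Prop)
    [DecidablePred QA] [DecidablePred QB]
    (k : ℕ) (bins : Fin k → Finset V)
    (hdisj : ∀ i j, i ≠ j → Disjoint (bins i) (bins j))
    (hcover : ∀ v : V, ∃ i, v ∈ bins i) :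
    Multiset.card
      (((A.filter QA) ×ˢ (B.filter QB)).filter (fun p => κA p.1 = κB p.2)) ≤
      ∑ i : Fin k,
        min
          ((∑ v ∈ bins i, (A.filter QA).countP (fun a => κA a = v)) *
            ((bins i).sup (fun v => (B.filter QB).countP (fun b => κB b = v))))
          ((∑ v ∈ bins i, (B.filter QB).countP (fun b => κB b = v)) *
            ((bins i).sup (fun v => (A.filter QA).countP (fun a => κA a = v)))) := by
  set A' := A.filter QA
  set B' := B.filter QB
  set cA := fun v => A'.countP (fun a => κA a = v) with hcA
  set cB := fun v => B'.countP (fun b => κB b = v) with hcB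
  rw [join_card_eq_sum]
  have huniv : (Finset.univ : Finset V) = Finset.univ.biUnion bins := by
    ext v
    simp only [Finset.mem_biUnion, Finset.mem_univ, true_iff]
    obtain ⟨i, hi⟩ := hcover v
    exact ⟨i, trivial, hi⟩
  rw [huniv, Finset.sum_biUnion (fun i _ j _ hij => hdisj i j hij)]
  apply Finset.sum_le_sum
  intro i _
  apply le_min
  · calc ∑ v ∈ bins i, cA v * cB v
        ≤ ∑ v ∈ bins i, cA v * (bins i).sup cB := by
          apply Finset.sum_le_sum
          intro v hv
          exact Nat.mul_le_mul_left _ (Finset.le_sup hv)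
      _ = (∑ v ∈ bins i, cA v) * (bins i).sup cB := by rw [Finset.sum_mul]
  · calc ∑ v ∈ bins i, cA v * cB v
        ≤ ∑ v ∈ bins i, cB v * (bins i).sup cA := by
          apply Finset.sum_le_sum
          intro v hv
          rw [mul_comm]
          exact Nat.mul_le_mul_left _ (Finset.le_sup hv)
      _ = (∑ v ∈ bins i, cB v) * (bins i).sup cA := by rw [Finset.sum_mul]
end

section
/- (Per-bin bound, three tables on a common key, appendix Case 2.) Let s be a finite set of values and f, g, h : s → ℕ functions with sums S_f, S_g, S_h and maxima M_f, M_g, M_h over s (maxima taken as 0 if s is empty). Then ∑_{v ∈ s} f(v) · g(v) · h(v) ≤ min(S_f · M_g · M_h, S_g · M_f · M_h, S_h · M_f · M_g). Consequently, for three tables A, B, C joined on the condition that their keys into a finite domain V are all equal, with V partitioned into bins, the join cardinality of the filtered tables is at most ∑_i min(S_{A,i} · V*_{B,i} · V*_{C,i}, S_{B,i} · V*_{A,i} · V*_{C,i}, S_{C,i} · V*_{A,i} · V*_{B,i}). -/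
lemma sum3_le {V : Type*} (s : Finset V) (f g h : V → ℕ) :
    ∑ v ∈ s, f v * g v * h v ≤ (∑ v ∈ s, f v) * s.sup g * s.sup h := by
  calc ∑ v ∈ s, f v * g v * h v ≤ ∑ v ∈ s, f v * (s.sup g * s.sup h) := by
        apply Finset.sum_le_sum
        intro v hv
        rw [mul_assoc]
        exact Nat.mul_le_mul_left _ (Nat.mul_le_mul (Finset.le_sup hv) (Finset.le_sup hv))
    _ = (∑ v ∈ s, f v) * (s.sup g * s.sup h) := by rw [← Finset.sum_mul]
    _ = _ := by ring

lemma sum3_min_le {V : Type*} (s : Finset V) (f g h : V → ℕ) :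
    ∑ v ∈ s, f v * g v * h v ≤
      min ((∑ v ∈ s, f v) * s.sup g * s.sup h)
        (min ((∑ v ∈ s, g v) * s.sup f * s.sup h)
          ((∑ v ∈ s, h v) * s.sup f * s.sup g)) := by
  refine le_min (sum3_le s f g h) (le_min ?_ ?_)
  · calc ∑ v ∈ s, f v * g v * h v = ∑ v ∈ s, g v * f v * h v := by
          apply Finset.sum_congr rfl; intros; ring
      _ ≤ _ := sum3_le s g f h
  · calc ∑ v ∈ s, f v * g v * h v = ∑ v ∈ s, h v * f v * g v := by
          apply Finset.sum_congr rfl; intros; ring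
      _ ≤ _ := sum3_le s h f g

lemma countP_prod2 {R_B R_C V : Type*} [DecidableEq V]
    (B : Multiset R_B) (C : Multiset R_C) (κB : R_B → V) (κC : R_C → V) (v : V) :
    (B ×ˢ C).countP (fun q => κB q.1 = v ∧ κC q.2 = v)
      = B.countP (fun b => κB b = v) * C.countP (fun c => κC c = v) := by
  induction B using Multiset.induction with
  | empty => simp
  | cons b B ih =>
    rw [Multiset.cons_product, Multiset.countP_add, ih, Multiset.countP_map,
      Multiset.countP_cons]
    by_cases hb : κB b = v <;> simp [hb, Multiset.countP_eq_card_filter, add_mul, add_comm,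
      Function.comp, Multiset.filter_eq_nil]

lemma card_triple {R_A R_B R_C V : Type*} [Fintype V] [DecidableEq V]
    (A : Multiset R_A) (B : Multiset R_B) (C : Multiset R_C)
    (κA : R_A → V) (κB : R_B → V) (κC : R_C → V) :
    Multiset.card ((A ×ˢ B ×ˢ C).filter
        (fun p => κA p.1 = κB p.2.1 ∧ κB p.2.1 = κC p.2.2))
      = ∑ v : V, A.countP (fun a => κA a = v) * B.countP (fun b => κB b = v)
          * C.countP (fun c => κC c = v) := by
  rw [← Multiset.countP_eq_card_filter]
  induction A using Multiset.induction with
  | empty => simp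
  | cons a A ih =>
    rw [Multiset.cons_product, Multiset.countP_add, ih, Multiset.countP_map,
      ← Multiset.countP_eq_card_filter]
    have h1 : Multiset.countP
        (fun q : R_B × R_C => κA (a, q).1 = κB (a, q).2.1 ∧ κB (a, q).2.1 = κC (a, q).2.2)
        (B ×ˢ C)
        = B.countP (fun b => κB b = κA a) * C.countP (fun c => κC c = κA a) := by
      rw [← countP_prod2 B C κB κC (κA a)]
      apply Multiset.countP_congr rfl
      intro q _
      simp only [eq_iff_iff]
      constructor
      · rintro ⟨h1, h2⟩; exact ⟨h1.symm, (h1.trans h2).symm⟩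
      · rintro ⟨h1, h2⟩; exact ⟨h1.symm, h1.trans h2.symm⟩
    rw [h1]
    simp only [Multiset.countP_cons, add_mul]
    rw [Finset.sum_add_distrib, add_comm]
    congr 1
    simp [ite_mul, one_mul, zero_mul, Finset.sum_ite_eq]

/-- Per-bin bound, three tables on a common key, appendix
Case 2. For any bin s and per-value counts f, g, h, the sum ∑ f·g·h is at most
the minimum of the three total-times-maxima products; consequently the
cardinality of the three-table common-key join of filtered tables is bounded by
the bin-wise sum of such minima. -/
theorem three_table_mfv_bound
    {R_A R_B R_C V : Type*} [Fintype V] [DecidableEq V]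
    (A : Multiset R_A) (B : Multiset R_B) (C : Multiset R_C)
    (κA : R_A → V) (κB : R_B → V) (κC : R_C → V)
    (QA : R_A → Prop) (QB : R_B → Prop) (QC : R_C → Prop)
    [DecidablePred QA] [DecidablePred QB] [DecidablePred QC]
    (k : ℕ) (bins : Fin k → Finset V)
    (hdisj : ∀ i j, i ≠ j → Disjoint (bins i) (bins j))
    (hcover : ∀ v : V, ∃ i, v ∈ bins i) :
    (∀ (s : Finset V) (f g h : V → ℕ),
      ∑ v ∈ s, f v * g v * h v ≤
        min ((∑ v ∈ s, f v) * s.sup g * s.sup h)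
          (min ((∑ v ∈ s, g v) * s.sup f * s.sup h)
            ((∑ v ∈ s, h v) * s.sup f * s.sup g))) ∧
    Multiset.card
      (((A.filter QA) ×ˢ (B.filter QB) ×ˢ (C.filter QC)).filter
        (fun p => κA p.1 = κB p.2.1 ∧ κB p.2.1 = κC p.2.2)) ≤
      ∑ i : Fin k,
        min
          ((∑ v ∈ bins i, (A.filter QA).countP (fun a => κA a = v)) *
            ((bins i).sup (fun v => (B.filter QB).countP (fun b => κB b = v))) *
            ((bins i).sup (fun v => (C.filter QC).countP (fun c => κC c = v))))
          (min
            ((∑ v ∈ bins i, (B.filter QB).countP (fun b => κB b = v)) *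
              ((bins i).sup (fun v => (A.filter QA).countP (fun a => κA a = v))) *
              ((bins i).sup (fun v => (C.filter QC).countP (fun c => κC c = v))))
            ((∑ v ∈ bins i, (C.filter QC).countP (fun c => κC c = v)) *
              ((bins i).sup (fun v => (A.filter QA).countP (fun a => κA a = v))) *
              ((bins i).sup (fun v => (B.filter QB).countP (fun b => κB b = v))))) := by
  refine ⟨fun s f g h => sum3_min_le s f g h, ?_⟩
  rw [card_triple (A.filter QA) (B.filter QB) (C.filter QC) κA κB κC]
  have hpart : (Finset.univ : Finset V) = Finset.univ.biUnion bins := by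
    ext v
    simpa using hcover v
  rw [hpart, Finset.sum_biUnion (fun i _ j _ hij => hdisj i j hij)]
  exact Finset.sum_le_sum fun i _ => sum3_min_le (bins i) _ _ _
end

section
/- (Soundness of the progressive/chain bound, appendix Case 3.) Let A, B, C be tables where A has key κ_A into finite domain V₁, B has keys λ_B into V₁ and μ_B into V₂, and C has key κ_C into V₂; let Q_A, Q_B, Q_C be filters. Define h : V₂ → ℕ by h(v₂) = ∑_{v₁ ∈ V₁} c_{A|Q_A,κ_A}(v₁) · c_{B|Q_B}(v₁, v₂) (the key-value counts of the intermediate join A ⋈ B). Let {bin_1, …, bin_k} be a partition of V₂, and suppose for each bin i we are given numbers U_i ≥ ∑_{v₂ ∈ bin_i} h(v₂) and M_i ≥ max_{v₂ ∈ bin_i} h(v₂). Then the three-table chain-join cardinality satisfies |{(a,b,c) : a ∈ A|Q_A, b ∈ B|Q_B, c ∈ C|Q_C, κ_A(a) = λ_B(b), μ_B(b) = κ_C(c)}| ≤ ∑_{i=1}^{k} min(U_i · V*_{C,i}, S_{C,i} · M_i), where S_{C,i} and V*_{C,i} are the total and most-frequent-value counts of c_{C|Q_C,κ_C} over bin_i.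 -/
lemma aux_card_filter_product {α β : Type*} (s : Multiset α) (t : Multiset β)
    (p : α × β → Prop) [DecidablePred p] :
    Multiset.card ((s ×ˢ t).filter p)
      = (s.map (fun a => Multiset.card (t.filter (fun b => p (a, b))))).sum := by
  induction s using Multiset.induction with
  | empty => simp
  | cons a s ih =>
      rw [Multiset.cons_product, Multiset.filter_add, Multiset.map_cons, Multiset.sum_cons,
        ← ih, Multiset.card_add, Multiset.filter_map]
      simp [Function.comp]

lemma aux_sum_map_key {α V : Type*} [Fintype V] [DecidableEq V]
    (s : Multiset α) (κ : α → V) (F : V → ℕ) :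
    (s.map (fun x => F (κ x))).sum = ∑ v : V, (s.countP (fun x => κ x = v)) * F v := by
  induction s using Multiset.induction with
  | empty => simp
  | cons a s ih =>
      simp only [Multiset.map_cons, Multiset.sum_cons, ih, Multiset.countP_cons]
      have : ∀ v : V, (s.countP (fun x => κ x = v) + if κ a = v then 1 else 0) * F v
          = s.countP (fun x => κ x = v) * F v + (if κ a = v then F v else 0) := by
        intro v; split <;> ring
      simp_rw [this]
      rw [Finset.sum_add_distrib, Finset.sum_ite_eq Finset.univ (κ a) F]
      simp [add_comm]


/-- Soundness of the progressive/chain bound, appendix Case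
3. If h gives the per-value key counts of the intermediate join A ⋈ B on B's
second key, and for each bin of a partition of V₂ we are given upper bounds U_i
on the bin's total intermediate count and M_i on its most-frequent-value
intermediate count, then the three-table chain-join cardinality is at most
∑ᵢ min(Uᵢ·V*_{C,i}, S_{C,i}·Mᵢ). -/
theorem chain_join_progressive_bound
    {R_A R_B R_C V₁ V₂ : Type*}
    [Fintype V₁] [DecidableEq V₁] [Fintype V₂] [DecidableEq V₂]
    (A : Multiset R_A) (B : Multiset R_B) (C : Multiset R_C)
    (κA : R_A → V₁) (lB : R_B → V₁) (mB : R_B → V₂) (κC : R_C → V₂)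
    (QA : R_A → Prop) (QB : R_B → Prop) (QC : R_C → Prop)
    [DecidablePred QA] [DecidablePred QB] [DecidablePred QC]
    (h : V₂ → ℕ)
    (hdef : ∀ v₂ : V₂, h v₂ =
      ∑ v₁ : V₁,
        ((A.filter QA).countP (fun a => κA a = v₁)) *
        ((B.filter QB).countP (fun b => lB b = v₁ ∧ mB b = v₂)))
    (k : ℕ) (bins : Fin k → Finset V₂)
    (hdisj : ∀ i j, i ≠ j → Disjoint (bins i) (bins j))
    (hcover : ∀ v : V₂, ∃ i, v ∈ bins i)
    (U M : Fin k → ℕ)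
    (hU : ∀ i, ∑ v ∈ bins i, h v ≤ U i)
    (hM : ∀ i, (bins i).sup h ≤ M i) :
    Multiset.card
      (((A.filter QA) ×ˢ (B.filter QB) ×ˢ (C.filter QC)).filter
        (fun p => κA p.1 = lB p.2.1 ∧ mB p.2.1 = κC p.2.2)) ≤
      ∑ i : Fin k,
        min
          (U i * ((bins i).sup (fun v => (C.filter QC).countP (fun c => κC c = v))))
          ((∑ v ∈ bins i, (C.filter QC).countP (fun c => κC c = v)) * M i) := by
  set A' := A.filter QA with hA'
  set B' := B.filter QB with hB'
  set C' := C.filter QC with hC'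
  set cC : V₂ → ℕ := fun v => C'.countP (fun c => κC c = v) with hcC
  -- Step 1: card = ∑ v₂, h v₂ * cC v₂
  have inner2 : ∀ (a : R_A) (b : R_B),
      Multiset.card (C'.filter (fun c => κA a = lB b ∧ mB b = κC c))
        = if κA a = lB b then cC (mB b) else 0 := by
    intro a b
    by_cases hab : κA a = lB b
    · simp only [hab, true_and, if_pos rfl, hcC, Multiset.countP_eq_card_filter]
      congr 1
      exact Multiset.filter_congr (fun c _ => by constructor <;> exact fun e => e.symm)
    · rw [if_neg hab]
      have : Multiset.filter (fun c => κA a = lB b ∧ mB b = κC c) C' = 0 :=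
        Multiset.filter_eq_nil.mpr (fun c _ hc => hab hc.1)
      rw [this, Multiset.card_zero]
  have step1 : Multiset.card ((A' ×ˢ B' ×ˢ C').filter
        (fun p => κA p.1 = lB p.2.1 ∧ mB p.2.1 = κC p.2.2))
      = ∑ v₂ : V₂, h v₂ * cC v₂ := by
    rw [aux_card_filter_product A' (B' ×ˢ C')
      (fun p => κA p.1 = lB p.2.1 ∧ mB p.2.1 = κC p.2.2)]
    have hinner : ∀ a : R_A,
        Multiset.card ((B' ×ˢ C').filter (fun bc => κA a = lB bc.1 ∧ mB bc.1 = κC bc.2))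
          = ∑ q : V₁ × V₂, (B'.countP (fun b => (lB b, mB b) = q)) *
              (if κA a = q.1 then cC q.2 else 0) := by
      intro a
      rw [aux_card_filter_product B' C' (fun bc => κA a = lB bc.1 ∧ mB bc.1 = κC bc.2)]
      have : (B'.map (fun b =>
          Multiset.card (C'.filter (fun c => κA a = lB b ∧ mB b = κC c)))).sum
          = (B'.map (fun b =>
              (fun q : V₁ × V₂ => if κA a = q.1 then cC q.2 else 0) ((lB b, mB b)))).sum := by
        congr 1
        exact Multiset.map_congr rfl (fun b _ => inner2 a b)
      rw [this, aux_sum_map_key B' (fun b => (lB b, mB b))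
        (fun q : V₁ × V₂ => if κA a = q.1 then cC q.2 else 0)]
    have hmap : (A'.map (fun a =>
        Multiset.card ((B' ×ˢ C').filter (fun bc => κA a = lB bc.1 ∧ mB bc.1 = κC bc.2)))).sum
        = (A'.map (fun a => (fun v : V₁ => ∑ q : V₁ × V₂,
            (B'.countP (fun b => (lB b, mB b) = q)) *
            (if v = q.1 then cC q.2 else 0)) (κA a))).sum := by
      congr 1
      exact Multiset.map_congr rfl (fun a _ => hinner a)
    rw [hmap, aux_sum_map_key A' κA (fun v : V₁ => ∑ q : V₁ × V₂,
      (B'.countP (fun b => (lB b, mB b) = q)) * (if v = q.1 then cC q.2 else 0))]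
    have hBP : ∀ (v₁ : V₁) (v₂ : V₂),
        B'.countP (fun b => (lB b, mB b) = (v₁, v₂))
          = B'.countP (fun b => lB b = v₁ ∧ mB b = v₂) := by
      intro v₁ v₂
      exact Multiset.countP_congr rfl (fun b _ => by simp [Prod.ext_iff])
    calc ∑ v : V₁, (A'.countP (fun a => κA a = v)) *
            (∑ q : V₁ × V₂, (B'.countP (fun b => (lB b, mB b) = q)) *
              (if v = q.1 then cC q.2 else 0))
        = ∑ v : V₁, ∑ v₂ : V₂, (A'.countP (fun a => κA a = v)) *
            ((B'.countP (fun b => lB b = v ∧ mB b = v₂)) * cC v₂) := by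
          refine Finset.sum_congr rfl (fun v _ => ?_)
          rw [Fintype.sum_prod_type, Finset.mul_sum]
          rw [Finset.sum_eq_single v (fun w _ hw => by simp [Ne.symm hw])
            (fun habs => absurd (Finset.mem_univ v) habs)]
          rw [Finset.mul_sum]
          refine Finset.sum_congr rfl (fun v₂ _ => ?_)
          rw [hBP]
          simp
      _ = ∑ v₂ : V₂, h v₂ * cC v₂ := by
          rw [Finset.sum_comm]
          refine Finset.sum_congr rfl (fun v₂ _ => ?_)
          rw [hdef v₂, Finset.sum_mul]
          refine Finset.sum_congr rfl (fun v₁ _ => ?_)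
          ring
  rw [step1]
  -- Step 2: partition the sum over V₂ into bins
  have hcoverset : (Finset.univ : Finset V₂) = Finset.univ.biUnion bins := by
    ext v
    simp only [Finset.mem_univ, true_iff]
    refine Finset.mem_biUnion.mpr ?_
    obtain ⟨i, hi⟩ := hcover v
    exact ⟨i, Finset.mem_univ i, hi⟩
  have hsplit : ∑ v₂ : V₂, h v₂ * cC v₂ = ∑ i : Fin k, ∑ v ∈ bins i, h v * cC v := by
    rw [show (∑ v₂ : V₂, h v₂ * cC v₂) = ∑ v₂ ∈ Finset.univ.biUnion bins, h v₂ * cC v₂ from by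
      rw [← hcoverset]]
    exact Finset.sum_biUnion (fun i _ j _ hij => hdisj i j hij)
  rw [hsplit]
  -- Step 3: bound each bin
  refine Finset.sum_le_sum (fun i _ => ?_)
  refine le_min ?_ ?_
  · calc ∑ v ∈ bins i, h v * cC v
        ≤ ∑ v ∈ bins i, h v * ((bins i).sup cC) := by
          refine Finset.sum_le_sum (fun v hv => ?_)
          exact Nat.mul_le_mul_left _ (Finset.le_sup hv)
      _ = (∑ v ∈ bins i, h v) * ((bins i).sup cC) := by rw [Finset.sum_mul]
      _ ≤ U i * ((bins i).sup cC) := Nat.mul_le_mul_right _ (hU i)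
  · calc ∑ v ∈ bins i, h v * cC v
        ≤ ∑ v ∈ bins i, M i * cC v := by
          refine Finset.sum_le_sum (fun v hv => ?_)
          exact Nat.mul_le_mul_right _ (le_trans (Finset.le_sup hv) (hM i))
      _ = (∑ v ∈ bins i, cC v) * M i := by rw [← Finset.mul_sum]; ring
end
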